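/- Let ℐ be a strictly positive ideal of Φ⁺ and w ∈ W_a with supp(w) = ℐ. Then k(α, w) ≤ α_{ℐ,−} for all α ∈ Φ⁺, where α_{ℐ,−} := min{ k : α is a sum of k+1 elements of Φ⁺ \ ℐ }. -/

import Mathlib

open RealInnerProductSpace
open scoped Classical

variable {V : Type*} [NormedAddCommGroup V] [InnerProductSpace ℝ V] [FiniteDimensional ℝ V]

/-- A finite crystallographic root system in the real inner product space `V`. -/
structure IsRootSystem (Φ : Set V) : Prop where
  finite : Φ.Finite
  nonzero : (0 : V) ∉ Φ
  spanning : Submodule.span ℝ Φ = ⊤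
  reflect_mem : ∀ α ∈ Φ, ∀ β ∈ Φ, β - (2 * ⟪β, α⟫ / ⟪α, α⟫) • α ∈ Φ
  crystallographic : ∀ α ∈ Φ, ∀ β ∈ Φ, ∃ n : ℤ, 2 * ⟪β, α⟫ / ⟪α, α⟫ = (n : ℝ)

/-- `Pos` is a system of positive roots for `Φ`: the roots on the positive side of a
generic linear functional. -/
def IsPositiveSystem (Φ Pos : Set V) : Prop :=
  ∃ f : V →ₗ[ℝ] ℝ, (∀ α ∈ Φ, f α ≠ 0) ∧ Pos = {α ∈ Φ | 0 < f α}

/-- Irreducibility of a root system: no splitting into two nonempty orthogonal parts. -/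
def IsIrreducibleRootSystem (Φ : Set V) : Prop :=
  Φ.Nonempty ∧ ∀ Φ₁ Φ₂ : Set V, Φ = Φ₁ ∪ Φ₂ →
    (∀ α ∈ Φ₁, ∀ β ∈ Φ₂, ⟪α, β⟫ = 0) → Φ₁ = ∅ ∨ Φ₂ = ∅

/-- A simple root: a positive root that is not the sum of two positive roots. -/
def IsSimpleRoot (Pos : Set V) (α : V) : Prop :=
  α ∈ Pos ∧ ∀ β ∈ Pos, ∀ γ ∈ Pos, α ≠ β + γ

/-- An upper order ideal of the positive roots. -/
def IsUpperIdeal (Pos I : Set V) : Prop :=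
  I ⊆ Pos ∧ ∀ α ∈ I, ∀ β ∈ Pos, α + β ∈ Pos → α + β ∈ I

/-- `γ` is a sum of `k` elements of `S`. -/
def IsSumOf (S : Set V) (k : ℕ) (γ : V) : Prop :=
  ∃ f : Fin k → V, (∀ i, f i ∈ S) ∧ ∑ i, f i = γ

/-- The standard partial order on roots: `α ≼ γ` iff `γ - α` is a (possibly empty)
sum of positive roots. -/
def RootLE (Pos : Set V) (α γ : V) : Prop := ∃ k, IsSumOf Pos k (γ - α)

/-- The set of minimal roots of an ideal `I`. -/
def minimalRoots (Pos I : Set V) : Set V :=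
  {α | α ∈ I ∧ ∀ β ∈ I, RootLE Pos β α → β = α}

/-- `γ_{I,+}`: the maximal number of summands in a decomposition of `γ` as a sum of
elements of `I` (with junk value `0` if no decomposition exists). -/
noncomputable def aPlus (I : Set V) (γ : V) : ℕ := sSup {k | IsSumOf I k γ}

/-- `γ_{I,-}`: the minimal `k` such that `γ` is a sum of `k + 1` elements of
`Pos \ I`. -/
noncomputable def aMinus (Pos I : Set V) (γ : V) : ℕ := sInf {k | IsSumOf (Pos \ I) (k + 1) γ}

/-- The height of a positive root: the number of summands when written as a sum of
simple roots. -/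
noncomputable def rootHeight (Pos : Set V) (γ : V) : ℕ :=
  sSup {k | IsSumOf {α | IsSimpleRoot Pos α} k γ}

/-- The reflection in the hyperplane orthogonal to `α`. -/
noncomputable def rootReflection (α : V) : V ≃ₗᵢ[ℝ] V :=
  Submodule.reflection ((ℝ ∙ α)ᗮ)

/-- The Weyl group: the subgroup of linear isometries generated by root reflections. -/
noncomputable def WeylGroup (Φ : Set V) : Subgroup (V ≃ₗᵢ[ℝ] V) :=
  Subgroup.closure {g | ∃ α ∈ Φ, g = rootReflection α}

/-- The coroot `α∨ = 2α/⟨α,α⟩` of a root `α`. -/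
noncomputable def coroot (α : V) : V := (2 / ⟪α, α⟫) • α

/-- The coroot lattice `Q∨`. -/
noncomputable def corootLattice (Φ : Set V) : AddSubgroup V :=
  AddSubgroup.closure {v | ∃ α ∈ Φ, v = coroot α}

/-- A root reflection viewed as an affine transformation. -/
noncomputable def rootReflectionAff (α : V) : V ≃ᵃ[ℝ] V :=
  (rootReflection α).toLinearEquiv.toAffineEquiv

/-- The affine Weyl group `W_a ≅ W ⋉ Q∨`: generated by the root reflections together
with the translations by elements of the coroot lattice. -/
noncomputable def affineWeylGroup (Φ : Set V) : Subgroup (V ≃ᵃ[ℝ] V) :=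
  Subgroup.closure
    ({g | ∃ α ∈ Φ, g = rootReflectionAff α} ∪
     {g | ∃ lam ∈ corootLattice Φ, g = AffineEquiv.constVAdd ℝ V lam})

/-- The fundamental alcove `A` (with respect to the highest root `θ`). -/
def fundamentalAlcove (Pos : Set V) (θ : V) : Set V :=
  {v | (∀ α, IsSimpleRoot Pos α → 0 < ⟪α, v⟫) ∧ ⟪θ, v⟫ < 1}

/-- `kk α = k(α, w)` for every positive root `α`: the alcove `w(A)` lies strictly
between the hyperplanes `H_{α, kk α}` and `H_{α, kk α + 1}`. -/
def IsAlcoveK (Pos : Set V) (θ : V) (w : V ≃ᵃ[ℝ] V) (kk : V → ℤ) : Prop :=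
  ∀ α ∈ Pos, ∀ v ∈ fundamentalAlcove Pos θ,
    (kk α : ℝ) < ⟪α, w v⟫ ∧ ⟪α, w v⟫ < kk α + 1

/-- `supp w = I` for an ideal `I ⊆ Φ⁺`: `w` is dominant (no negative root occurs in
the support, i.e. `k(α, w) ≥ 0` for all positive `α`) and a positive root `α` lies in
the support (i.e. `k(α, w) ≥ 1`) exactly when `α ∈ I`. -/
def SuppIs (Pos : Set V) (θ : V) (w : V ≃ᵃ[ℝ] V) (I : Set V) : Prop :=
  ∃ kk : V → ℤ, IsAlcoveK Pos θ w kk ∧ ∀ α ∈ Pos, 0 ≤ kk α ∧ (α ∈ I ↔ 1 ≤ kk α)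

/-- The sign type `ST(I)`: the set of elements of the affine Weyl group whose support
is `I`. -/
noncomputable def signType (Φ Pos : Set V) (θ : V) (I : Set V) : Set (V ≃ᵃ[ℝ] V) :=
  {w | w ∈ affineWeylGroup Φ ∧ SuppIs Pos θ w I}

/-- The length of `w ∈ W_a`, computed as `∑_{α ∈ Φ⁺} |k(α, w)|`. -/
noncomputable def affLen (Pos : Set V) (θ : V) (w : V ≃ᵃ[ℝ] V) : ℕ :=
  if h : ∃ kk : V → ℤ, IsAlcoveK Pos θ w kk then
    ∑ᶠ α ∈ Pos, (h.choose α).natAbs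
  else 0

/-- The simple affine reflections `S = {s₀, s₁, …, s_n}` of `W_a`: the reflections in
the simple roots together with the affine reflection `s₀ = s_θ τ_{-θ∨}` in `H_{θ,1}`. -/
noncomputable def simpleAffineReflections (Pos : Set V) (θ : V) : Set (V ≃ᵃ[ℝ] V) :=
  {s | (∃ α, IsSimpleRoot Pos α ∧ s = rootReflectionAff α) ∨
    s = (rootReflectionAff θ).trans (AffineEquiv.constVAdd ℝ V (coroot θ))}

/-- The translation part `λ` of `w = x τ_λ` (so that `w v = x (v + λ)`). -/
noncomputable def translationPart (w : V ≃ᵃ[ℝ] V) : V := w.linear.symm (w 0)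

set_option linter.unusedSectionVars false in
lemma isSumOf_add_aux {S : Set V} {m n : ℕ} {x y : V} (hx : IsSumOf S m x)
    (hy : IsSumOf S n y) : IsSumOf S (m + n) (x + y) := by
  obtain ⟨g, hg, hgs⟩ := hx
  obtain ⟨h, hh, hhs⟩ := hy
  refine ⟨Fin.append g h, fun i => ?_, ?_⟩
  · refine Fin.addCases (fun j => ?_) (fun j => ?_) i <;>
      simp [Fin.append_left, Fin.append_right, hg, hh]
  · rw [Fin.sum_univ_add]
    simp [Fin.append_left, Fin.append_right, hgs, hhs]

set_option linter.unusedSectionVars false in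
/-- Every positive root is a sum of elements of `Pos \ I` when `I` avoids the
simple roots. -/
lemma decomp_aux {Pos I : Set V} (hPfin : Pos.Finite) (f : V →ₗ[ℝ] ℝ)
    (hf : ∀ α ∈ Pos, 0 < f α) (hsp : ∀ α, IsSimpleRoot Pos α → α ∉ I) :
    ∀ α ∈ Pos, ∃ k, IsSumOf (Pos \ I) (k + 1) α := by
  suffices H : ∀ n, ∀ α ∈ Pos, ({δ ∈ Pos | f δ < f α}).ncard = n →
      ∃ k, IsSumOf (Pos \ I) (k + 1) α by
    intro α hα
    exact H _ α hα rfl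
  intro n
  induction n using Nat.strong_induction_on with
  | _ n IH =>
    intro α hα hn
    by_cases hs : IsSimpleRoot Pos α
    · exact ⟨0, fun _ => α, fun _ => ⟨hα, hsp α hs⟩, by simp⟩
    · rw [IsSimpleRoot] at hs
      push_neg at hs
      obtain ⟨β, hβ, γ, hγ, hαbg⟩ := hs hα
      have hfβ : f β < f α := by
        have := hf γ hγ
        have : f α = f β + f γ := by rw [hαbg]; exact map_add f β γ
        linarith
      have hfγ : f γ < f α := by
        have := hf β hβ
        have : f α = f β + f γ := by rw [hαbg]; exact map_add f β γ
        linarith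
      have hsub : ∀ δ, f δ < f α → ({x ∈ Pos | f x < f δ}).ncard < n ∧ δ ∈ Pos →
          True := fun _ _ _ => trivial
      have key : ∀ δ ∈ Pos, f δ < f α → ({x ∈ Pos | f x < f δ}).ncard < n := by
        intro δ hδ hfd
        rw [← hn]
        refine Set.ncard_lt_ncard ?_ (hPfin.subset (Set.sep_subset _ _))
        constructor
        · intro x hx
          exact ⟨hx.1, lt_trans hx.2 hfd⟩
        · intro hcon
          have := (hcon ⟨hδ, hfd⟩).2
          exact lt_irrefl _ this
      obtain ⟨k₁, h₁⟩ := IH _ (key β hβ hfβ) β hβ rfl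
      obtain ⟨k₂, h₂⟩ := IH _ (key γ hγ hfγ) γ hγ rfl
      refine ⟨k₁ + k₂ + 1, ?_⟩
      have := isSumOf_add_aux h₁ h₂
      rw [← hαbg] at this
      have he : (k₁ + 1) + (k₂ + 1) = (k₁ + k₂ + 1) + 1 := by ring
      rwa [he] at this

/-- If `I` is a strictly positive ideal of `Φ⁺` and `w ∈ W_a` has `supp w = I`, then
`k(α, w) ≤ α_{I,-}` for all `α ∈ Φ⁺`. -/
theorem k_le_aMinus (Φ Pos I : Set V) (hΦ : IsRootSystem Φ)
    (hirr : IsIrreducibleRootSystem Φ) (hPos : IsPositiveSystem Φ Pos)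
    (θ : V) (hθ : θ ∈ Pos ∧ ∀ α ∈ Φ, RootLE Pos α θ)
    (hI : IsUpperIdeal Pos I) (hsp : ∀ α, IsSimpleRoot Pos α → α ∉ I)
    (w : V ≃ᵃ[ℝ] V) (hw : w ∈ affineWeylGroup Φ)
    (kk : V → ℤ) (hkk : IsAlcoveK Pos θ w kk)
    (hsupp : ∀ α ∈ Pos, 0 ≤ kk α ∧ (α ∈ I ↔ 1 ≤ kk α)) :
    ∀ α ∈ Pos, kk α ≤ (aMinus Pos I α : ℤ) := by
  obtain ⟨φ, hφne, hφPos⟩ := hPos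
  have hPsub : Pos ⊆ Φ := by rw [hφPos]; exact fun x hx => hx.1
  have hPfin : Pos.Finite := hΦ.finite.subset hPsub
  have hf : ∀ α ∈ Pos, 0 < φ α := by
    intro α hα; rw [hφPos] at hα; exact hα.2
  -- a point in the fundamental alcove
  set u : V := (InnerProductSpace.toDual ℝ V).symm (LinearMap.toContinuousLinearMap φ)
    with hu
  have hinner : ∀ x : V, ⟪x, u⟫ = φ x := by
    intro x
    rw [real_inner_comm, hu, InnerProductSpace.toDual_symm_apply]
    rfl
  have hθpos : 0 < φ θ := hf θ hθ.1
  set v₀ : V := (1 / (2 * φ θ)) • u with hv₀def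
  have hv₀ : v₀ ∈ fundamentalAlcove Pos θ := by
    constructor
    · intro α hαs
      rw [hv₀def, real_inner_smul_right, hinner]
      have : 0 < φ α := hf α hαs.1
      positivity
    · rw [hv₀def, real_inner_smul_right, hinner]
      rw [div_mul_eq_mul_div, one_mul, div_lt_one (by positivity)]
      linarith
  intro α hα
  obtain ⟨k₀, hk₀⟩ := decomp_aux hPfin φ hf hsp α hα
  have hSne : {k | IsSumOf (Pos \ I) (k + 1) α}.Nonempty := ⟨k₀, hk₀⟩
  have hmem : aMinus Pos I α ∈ {k | IsSumOf (Pos \ I) (k + 1) α} := Nat.sInf_mem hSne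
  set m : ℕ := aMinus Pos I α
  obtain ⟨g, hg, hgs⟩ := hmem
  -- each summand has kk = 0, hence inner product < 1
  have hlt1 : ∀ i, ⟪g i, w v₀⟫ < 1 := by
    intro i
    have hgi : g i ∈ Pos := (hg i).1
    have hkk0 : kk (g i) = 0 := by
      have h1 := hsupp (g i) hgi
      have h2 : ¬ (1 ≤ kk (g i)) := fun hc => (hg i).2 (h1.2.mpr hc)
      omega
    have := (hkk (g i) hgi v₀ hv₀).2
    rw [hkk0] at this
    simpa using this
  have hsum : ⟪α, w v₀⟫ = ∑ i, ⟪g i, w v₀⟫ := by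
    rw [← hgs, sum_inner]
  have hlo : (kk α : ℝ) < ⟪α, w v₀⟫ := (hkk α hα v₀ hv₀).1
  have hhi : ⟪α, w v₀⟫ < (m : ℝ) + 1 := by
    rw [hsum]
    calc ∑ i, ⟪g i, w v₀⟫ < ∑ _i : Fin (m + 1), (1 : ℝ) :=
          Finset.sum_lt_sum_of_nonempty (by simp) (fun i _ => hlt1 i)
      _ = (m : ℝ) + 1 := by simp
  have : (kk α : ℝ) < (m : ℝ) + 1 := lt_trans hlo hhi
  have : kk α < (m : ℤ) + 1 := by exact_mod_cast this
  omega
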